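/- Let a = 1, set C = π²σ², and define F(t,x) = |V(t, ξ̄ + x)|² = e^{−2C(x+Δ/2)²} + e^{−2C(x−Δ/2)²} + 2cos(2πΔt)·e^{−C(2x² + Δ²/2)}. For k ∈ ℤ parametrize the ellipse E_k by x(u) = a_e·cos u and t(u) = (k + 1/2)/Δ + b_e·sin u for u ∈ [0,2π], where a_e = 1/(√2·πσ) and b_e = arccos(1 − CΔ²)/(2πΔ). Then there exist constants K > 0 and Δ₀ > 0, depending only on σ, such that for every 0 < Δ ≤ Δ₀ and every k ∈ ℤ, the arc-length line integral ∫₀^{2π} |∂_x F(t(u), x(u))| · √(x′(u)² + (b_e cos u)²) du ≤ K·Δ². -/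

import Mathlib

noncomputable section

open MeasureTheory

/-- The squared modulus of the STFT in shifted coordinates (balanced amplitudes `a = 1`):
`F(t,x) = |V(t, ξ̄ + x)|² = e^{−2C(x+Δ/2)²} + e^{−2C(x−Δ/2)²} + 2cos(2πΔt)·e^{−C(2x²+Δ²/2)}`
with `C = π²σ²`. -/
def Ffun (σ Δ t x : ℝ) : ℝ :=
  Real.exp (-(2 * Real.pi ^ 2 * σ ^ 2 * (x + Δ / 2) ^ 2)) +
    Real.exp (-(2 * Real.pi ^ 2 * σ ^ 2 * (x - Δ / 2) ^ 2)) +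
    2 * Real.cos (2 * Real.pi * Δ * t) *
      Real.exp (-(Real.pi ^ 2 * σ ^ 2 * (2 * x ^ 2 + Δ ^ 2 / 2)))

/-- The frequency semi-axis of the bubble ellipse, `a_e = 1/(√2 πσ)`. -/
def aEll (σ : ℝ) : ℝ := 1 / (Real.sqrt 2 * Real.pi * σ)

/-- The time semi-axis of the bubble ellipse, `b_e = arccos(1 − CΔ²)/(2πΔ)`. -/
def bEll (σ Δ : ℝ) : ℝ :=
  Real.arccos (1 - Real.pi ^ 2 * σ ^ 2 * Δ ^ 2) / (2 * Real.pi * Δ)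

lemma expBound {s : ℝ} (hs : |s| ≤ 1) : |Real.exp s - (1 + s)| ≤ s ^ 2 := by
  have h := Real.exp_bound hs (n := 2) (by norm_num)
  have hsum : (∑ m ∈ Finset.range 2, s ^ m / m.factorial) = 1 + s := by
    simp [Finset.sum_range_succ]
  rw [hsum] at h
  calc |Real.exp s - (1 + s)| ≤ |s| ^ 2 * ((2:ℕ).succ / ((2:ℕ).factorial * 2)) := h
    _ ≤ s ^ 2 := by rw [sq_abs]; norm_num [Nat.factorial]; nlinarith [sq_nonneg s]


lemma hasDerivAt_Ffun (σ Δ t x : ℝ) :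
    HasDerivAt (fun y => Ffun σ Δ t y)
      (-(4 * Real.pi ^ 2 * σ ^ 2) *
        ((x + Δ / 2) * Real.exp (-(2 * Real.pi ^ 2 * σ ^ 2 * (x + Δ / 2) ^ 2)) +
         (x - Δ / 2) * Real.exp (-(2 * Real.pi ^ 2 * σ ^ 2 * (x - Δ / 2) ^ 2)) +
         2 * Real.cos (2 * Real.pi * Δ * t) * x *
           Real.exp (-(Real.pi ^ 2 * σ ^ 2 * (2 * x ^ 2 + Δ ^ 2 / 2))))) x := by
  have p1 : HasDerivAt (fun y : ℝ => -(2 * Real.pi ^ 2 * σ ^ 2 * (y + Δ / 2) ^ 2))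
      (-(2 * Real.pi ^ 2 * σ ^ 2 * (2 * (x + Δ / 2)))) x := by
    have h := ((((hasDerivAt_id x).add_const (Δ / 2)).pow 2).const_mul
      (2 * Real.pi ^ 2 * σ ^ 2)).neg
    refine h.congr_deriv ?_
    try simp only [id_eq]
    push_cast
    ring
  have p2 : HasDerivAt (fun y : ℝ => -(2 * Real.pi ^ 2 * σ ^ 2 * (y - Δ / 2) ^ 2))
      (-(2 * Real.pi ^ 2 * σ ^ 2 * (2 * (x - Δ / 2)))) x := by
    have h := ((((hasDerivAt_id x).sub_const (Δ / 2)).pow 2).const_mul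
      (2 * Real.pi ^ 2 * σ ^ 2)).neg
    refine h.congr_deriv ?_
    try simp only [id_eq]
    push_cast
    ring
  have p3 : HasDerivAt (fun y : ℝ => -(Real.pi ^ 2 * σ ^ 2 * (2 * y ^ 2 + Δ ^ 2 / 2)))
      (-(Real.pi ^ 2 * σ ^ 2 * (2 * (2 * x)))) x := by
    have h := ((((hasDerivAt_pow 2 x).const_mul 2).add_const (Δ ^ 2 / 2)).const_mul
      (Real.pi ^ 2 * σ ^ 2)).neg
    refine h.congr_deriv ?_
    try simp only [id_eq]
    push_cast
    ring
  have h := (p1.exp.add p2.exp).add (p3.exp.const_mul (2 * Real.cos (2 * Real.pi * Δ * t)))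
  refine h.congr_deriv ?_
  ring

lemma pointwise_bound (σ : ℝ) (hσ : 0 < σ) (Δ t x : ℝ) (hΔ : 0 < Δ)
    (hΔ₀ : Δ ≤ 1 / (2 * Real.pi * σ))
    (hx : |x| ≤ 1 / (Real.pi * σ))
    (hc1 : 0 ≤ 1 + Real.cos (2 * Real.pi * Δ * t))
    (hc2 : 1 + Real.cos (2 * Real.pi * Δ * t) ≤ Real.pi ^ 2 * σ ^ 2 * Δ ^ 2) :
    |deriv (fun y => Ffun σ Δ t y) x| ≤ 80 * Real.pi ^ 3 * σ ^ 3 * Δ ^ 2 := by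
  have hπ := Real.pi_pos
  have hP : 0 < Real.pi * σ := by positivity
  set c := Real.cos (2 * Real.pi * Δ * t) with hcdef
  set C := Real.pi ^ 2 * σ ^ 2 with hCdef
  have hCpos : 0 < C := by positivity
  set s := 2 * C * Δ * x with hsdef
  set E := Real.exp (-(C * (2 * x ^ 2 + Δ ^ 2 / 2))) with hEdef
  have hE1 : Real.exp (-(2 * C * (x + Δ / 2) ^ 2)) = E * Real.exp (-s) := by
    rw [hEdef, ← Real.exp_add]; congr 1; rw [hsdef]; ring
  have hE2 : Real.exp (-(2 * C * (x - Δ / 2) ^ 2)) = E * Real.exp s := by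
    rw [hEdef, ← Real.exp_add]; congr 1; rw [hsdef]; ring
  rw [(hasDerivAt_Ffun σ Δ t x).deriv]
  rw [show (2 : ℝ) * Real.pi ^ 2 * σ ^ 2 = 2 * C by rw [hCdef]; ring,
      show (Real.pi : ℝ) ^ 2 * σ ^ 2 = C from hCdef.symm, hE1, hE2]
  have key : (x + Δ / 2) * (E * Real.exp (-s)) + (x - Δ / 2) * (E * Real.exp s) +
      2 * c * x * E
      = E * (2 * x * (1 + c) - Δ * s + (x + Δ / 2) * (Real.exp (-s) - (1 - s)) +
        (x - Δ / 2) * (Real.exp s - (1 + s))) := by ring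
  rw [key]
  -- bounds on s
  have hsabs : |s| ≤ 2 * (Real.pi * σ) * Δ := by
    rw [hsdef]
    rw [abs_mul]
    have h1 : |2 * C * Δ| = 2 * C * Δ := abs_of_pos (by positivity)
    rw [h1]
    calc 2 * C * Δ * |x| ≤ 2 * C * Δ * (1 / (Real.pi * σ)) := by
          exact mul_le_mul_of_nonneg_left hx (by positivity)
      _ = 2 * (Real.pi * σ) * Δ := by rw [hCdef]; field_simp
  have hs1 : |s| ≤ 1 := by
    refine hsabs.trans ?_
    calc 2 * (Real.pi * σ) * Δ ≤ 2 * (Real.pi * σ) * (1 / (2 * Real.pi * σ)) := by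
          exact mul_le_mul_of_nonneg_left hΔ₀ (by positivity)
      _ = 1 := by field_simp
  have hs2 : s ^ 2 ≤ 4 * (Real.pi * σ) ^ 2 * Δ ^ 2 := by
    have := abs_nonneg s
    nlinarith [hsabs, sq_abs s]
  have hA : |Real.exp s - (1 + s)| ≤ s ^ 2 := expBound hs1
  have hB : |Real.exp (-s) - (1 - s)| ≤ s ^ 2 := by
    have := expBound (s := -s) (by rwa [abs_neg])
    simpa [sub_eq_add_neg] using this
  have hxd : |x| + Δ / 2 ≤ 2 / (Real.pi * σ) := by
    have h9 : 1 / (2 * Real.pi * σ) ≤ 1 / (Real.pi * σ) := by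
      apply one_div_le_one_div_of_le hP; nlinarith
    have h10 : (0:ℝ) ≤ 1 / (Real.pi * σ) := by positivity
    have : Δ / 2 ≤ 1 / (Real.pi * σ) := by linarith
    calc |x| + Δ / 2 ≤ 1 / (Real.pi * σ) + 1 / (Real.pi * σ) := by linarith
      _ = 2 / (Real.pi * σ) := by ring
  have hinner : |2 * x * (1 + c) - Δ * s + (x + Δ / 2) * (Real.exp (-s) - (1 - s)) +
      (x - Δ / 2) * (Real.exp s - (1 + s))| ≤ 20 * (Real.pi * σ) * Δ ^ 2 := by
    have t0 : |2 * x * (1 + c)| ≤ 2 * (Real.pi * σ) * Δ ^ 2 := by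
      rw [abs_mul, abs_mul, abs_of_nonneg hc1]
      calc |2| * |x| * (1 + c) ≤ 2 * (1 / (Real.pi * σ)) * (Real.pi ^ 2 * σ ^ 2 * Δ ^ 2) := by
            apply mul_le_mul (by rw [abs_two]; exact mul_le_mul_of_nonneg_left hx (by norm_num)) hc2 hc1 (by positivity)
        _ = 2 * (Real.pi * σ) * Δ ^ 2 := by field_simp
    have t1 : |Δ * s| ≤ 2 * (Real.pi * σ) * Δ ^ 2 := by
      rw [abs_mul, abs_of_pos hΔ]
      calc Δ * |s| ≤ Δ * (2 * (Real.pi * σ) * Δ) := mul_le_mul_of_nonneg_left hsabs hΔ.le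
        _ = 2 * (Real.pi * σ) * Δ ^ 2 := by ring
    have t2 : |(x + Δ / 2) * (Real.exp (-s) - (1 - s))| ≤ 8 * (Real.pi * σ) * Δ ^ 2 := by
      rw [abs_mul]
      calc |x + Δ / 2| * |Real.exp (-s) - (1 - s)|
          ≤ (2 / (Real.pi * σ)) * (4 * (Real.pi * σ) ^ 2 * Δ ^ 2) := by
            apply mul_le_mul ((abs_add_le _ _).trans (by
              simpa [abs_of_pos hΔ, abs_div] using hxd)) (hB.trans hs2) (abs_nonneg _) (by positivity)
        _ = 8 * (Real.pi * σ) * Δ ^ 2 := by field_simp; ring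
    have t3 : |(x - Δ / 2) * (Real.exp s - (1 + s))| ≤ 8 * (Real.pi * σ) * Δ ^ 2 := by
      rw [abs_mul]
      calc |x - Δ / 2| * |Real.exp s - (1 + s)|
          ≤ (2 / (Real.pi * σ)) * (4 * (Real.pi * σ) ^ 2 * Δ ^ 2) := by
            apply mul_le_mul ((abs_sub _ _).trans (by
              simpa [abs_of_pos hΔ, abs_div] using hxd)) (hA.trans hs2) (abs_nonneg _) (by positivity)
        _ = 8 * (Real.pi * σ) * Δ ^ 2 := by field_simp; ring
    calc |2 * x * (1 + c) - Δ * s + (x + Δ / 2) * (Real.exp (-s) - (1 - s)) +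
        (x - Δ / 2) * (Real.exp s - (1 + s))|
        ≤ |2 * x * (1 + c) - Δ * s + (x + Δ / 2) * (Real.exp (-s) - (1 - s))| +
          |(x - Δ / 2) * (Real.exp s - (1 + s))| := abs_add_le _ _
      _ ≤ (|2 * x * (1 + c) - Δ * s| + |(x + Δ / 2) * (Real.exp (-s) - (1 - s))|) +
          |(x - Δ / 2) * (Real.exp s - (1 + s))| := by gcongr; exact abs_add_le _ _
      _ ≤ ((|2 * x * (1 + c)| + |Δ * s|) + |(x + Δ / 2) * (Real.exp (-s) - (1 - s))|) +
          |(x - Δ / 2) * (Real.exp s - (1 + s))| := by gcongr; exact abs_sub _ _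
      _ ≤ 20 * (Real.pi * σ) * Δ ^ 2 := by linarith
  have hEle : E ≤ 1 := by
    rw [hEdef]
    apply Real.exp_le_one_iff.mpr
    have h0 : 0 ≤ C * (2 * x ^ 2 + Δ ^ 2 / 2) := by positivity
    linarith
  have hEpos : 0 < E := Real.exp_pos _
  rw [abs_mul, abs_mul, abs_neg, abs_of_pos (show (0:ℝ) < 4 * Real.pi ^ 2 * σ ^ 2 by positivity),
    abs_of_pos hEpos]
  have hstep : E * |2 * x * (1 + c) - Δ * s + (x + Δ / 2) * (Real.exp (-s) - (1 - s)) +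
      (x - Δ / 2) * (Real.exp s - (1 + s))| ≤ 1 * (20 * (Real.pi * σ) * Δ ^ 2) :=
    mul_le_mul hEle hinner (abs_nonneg _) zero_le_one
  calc 4 * Real.pi ^ 2 * σ ^ 2 * (E * |2 * x * (1 + c) - Δ * s +
        (x + Δ / 2) * (Real.exp (-s) - (1 - s)) + (x - Δ / 2) * (Real.exp s - (1 + s))|)
      ≤ 4 * Real.pi ^ 2 * σ ^ 2 * (1 * (20 * (Real.pi * σ) * Δ ^ 2)) := by
        exact mul_le_mul_of_nonneg_left hstep (by positivity)
    _ = 80 * Real.pi ^ 3 * σ ^ 3 * Δ ^ 2 := by ring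

set_option maxHeartbeats 1000000 in
/-- there are constants `K, Δ₀ > 0` depending only on `σ` such that for every
gap `0 < Δ ≤ Δ₀` (with `Δ ≤ √2/(πσ)`) and every `k ∈ ℤ`, the arc-length integral of
`|∂_x F|` over the parametrized ellipse `E_k` is at most `K·Δ²`. -/
theorem stmt6 (σ : ℝ) (hσ : 0 < σ) :
    ∃ K > (0 : ℝ), ∃ Δ₀ > (0 : ℝ), ∀ ξ₀ ξ₁ : ℝ, ξ₀ < ξ₁ → ξ₁ - ξ₀ ≤ Δ₀ →
      ξ₁ - ξ₀ ≤ Real.sqrt 2 / (Real.pi * σ) → ∀ k : ℤ,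
        (∫ u in (0 : ℝ)..(2 * Real.pi),
          |deriv
              (fun x =>
                Ffun σ (ξ₁ - ξ₀)
                  (((k : ℝ) + 1 / 2) / (ξ₁ - ξ₀) + bEll σ (ξ₁ - ξ₀) * Real.sin u) x)
              (aEll σ * Real.cos u)| *
            Real.sqrt ((aEll σ * Real.sin u) ^ 2 + (bEll σ (ξ₁ - ξ₀) * Real.cos u) ^ 2))
          ≤ K * (ξ₁ - ξ₀) ^ 2 := by
  have hπ := Real.pi_pos
  have hP : 0 < Real.pi * σ := by positivity
  refine ⟨80 * Real.pi ^ 3 * σ ^ 3 * (1 / (Real.pi * σ) + Real.pi * σ) * (2 * Real.pi),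
    by positivity, 1 / (2 * Real.pi * σ), by positivity, ?_⟩
  intro ξ₀ ξ₁ hlt hle hsqrt k
  set Δ := ξ₁ - ξ₀ with hΔdef
  have hΔ : 0 < Δ := sub_pos.mpr hlt
  set θ := Real.arccos (1 - Real.pi ^ 2 * σ ^ 2 * Δ ^ 2) with hθdef
  set g : ℝ → ℝ := fun u =>
    |deriv (fun x => Ffun σ Δ (((k : ℝ) + 1 / 2) / Δ + bEll σ Δ * Real.sin u) x)
        (aEll σ * Real.cos u)| *
      Real.sqrt ((aEll σ * Real.sin u) ^ 2 + (bEll σ Δ * Real.cos u) ^ 2) with hg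
  -- basic facts about θ
  have hC2 : Real.pi ^ 2 * σ ^ 2 * Δ ^ 2 ≤ 2 := by
    have h1 : Δ * (Real.pi * σ) ≤ Real.sqrt 2 := (le_div_iff₀ hP).mp hsqrt
    have h2 : (Δ * (Real.pi * σ)) ^ 2 ≤ Real.sqrt 2 ^ 2 :=
      pow_le_pow_left₀ (by positivity) h1 2
    rw [Real.sq_sqrt (by norm_num : (0:ℝ) ≤ 2)] at h2
    nlinarith
  have hθ0 : 0 ≤ θ := by rw [hθdef]; exact Real.arccos_nonneg _
  have hθπ : θ ≤ Real.pi := by rw [hθdef]; exact Real.arccos_le_pi _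
  have hcosθ : Real.cos θ = 1 - Real.pi ^ 2 * σ ^ 2 * Δ ^ 2 := by
    rw [hθdef]
    exact Real.cos_arccos (by nlinarith) (by nlinarith [sq_nonneg (Real.pi * σ * Δ)])
  have hbe : bEll σ Δ = θ / (2 * Real.pi * Δ) := by rw [bEll, hθdef]
  clear_value θ Δ g
  have hθsq : θ ^ 2 ≤ Real.pi ^ 4 * σ ^ 2 * Δ ^ 2 / 2 := by
    have h3 := Real.cos_le_one_sub_mul_cos_sq (x := θ) (by rw [abs_of_nonneg hθ0]; exact hθπ)
    rw [hcosθ] at h3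
    have hπ2 : (0:ℝ) < Real.pi ^ 2 := by positivity
    have h5 : 2 / Real.pi ^ 2 * θ ^ 2 ≤ Real.pi ^ 2 * σ ^ 2 * Δ ^ 2 := by linarith
    have h4 : 2 * θ ^ 2 ≤ Real.pi ^ 2 * σ ^ 2 * Δ ^ 2 * Real.pi ^ 2 := by
      calc 2 * θ ^ 2 = 2 / Real.pi ^ 2 * θ ^ 2 * Real.pi ^ 2 := by field_simp
        _ ≤ Real.pi ^ 2 * σ ^ 2 * Δ ^ 2 * Real.pi ^ 2 :=
            mul_le_mul_of_nonneg_right h5 hπ2.le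
    nlinarith [h4]
  have hθle : θ ≤ Real.pi ^ 2 * σ * Δ := by
    have hA : (0:ℝ) ≤ Real.pi ^ 2 * σ * Δ := by positivity
    have hsq : θ ^ 2 ≤ (Real.pi ^ 2 * σ * Δ) ^ 2 := by nlinarith [hθsq]
    exact (pow_le_pow_iff_left₀ hθ0 hA two_ne_zero).mp hsq
  -- bounds on the semi-axes
  have hb0 : 0 ≤ bEll σ Δ := by
    rw [hbe]; positivity
  have hble : bEll σ Δ ≤ Real.pi * σ := by
    rw [hbe, div_le_iff₀ (by positivity)]
    nlinarith
  have ha0 : 0 ≤ aEll σ := by rw [aEll]; positivity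
  have hs2 : (1:ℝ) ≤ Real.sqrt 2 := by
    rw [show (1:ℝ) = Real.sqrt 1 by simp]
    exact Real.sqrt_le_sqrt (by norm_num)
  have hale : aEll σ ≤ 1 / (Real.pi * σ) := by
    rw [aEll]
    apply one_div_le_one_div_of_le hP
    nlinarith
  -- pointwise bound on the integrand
  have hbnd : ∀ u ∈ Set.uIoc (0:ℝ) (2 * Real.pi),
      ‖g u‖ ≤ 80 * Real.pi ^ 3 * σ ^ 3 * Δ ^ 2 * (1 / (Real.pi * σ) + Real.pi * σ) := by
    intro u _
    rw [hg]
    simp only []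
    rw [Real.norm_eq_abs, abs_of_nonneg (by positivity)]
    have harg : 2 * Real.pi * Δ * (((k : ℝ) + 1 / 2) / Δ + bEll σ Δ * Real.sin u) =
        (Real.pi + θ * Real.sin u) + (k : ℝ) * (2 * Real.pi) := by
      rw [hbe]
      field_simp
      ring
    have hcos : Real.cos (2 * Real.pi * Δ * (((k : ℝ) + 1 / 2) / Δ + bEll σ Δ * Real.sin u)) =
        -Real.cos (θ * Real.sin u) := by
      rw [harg, Real.cos_add_int_mul_two_pi,
        show Real.pi + θ * Real.sin u = Real.pi - (-(θ * Real.sin u)) by ring,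
        Real.cos_pi_sub, Real.cos_neg]
    have hsin1 : |θ * Real.sin u| ≤ θ := by
      rw [abs_mul, abs_of_nonneg hθ0]
      nlinarith [Real.abs_sin_le_one u, abs_nonneg (Real.sin u)]
    have h6 : Real.cos θ ≤ Real.cos (θ * Real.sin u) := by
      rw [← Real.cos_abs (θ * Real.sin u)]
      exact Real.cos_le_cos_of_nonneg_of_le_pi (abs_nonneg _) hθπ hsin1
    have hc1 : 0 ≤ 1 + Real.cos (2 * Real.pi * Δ *
        (((k : ℝ) + 1 / 2) / Δ + bEll σ Δ * Real.sin u)) := by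
      rw [hcos]; linarith [Real.cos_le_one (θ * Real.sin u)]
    have hc2 : 1 + Real.cos (2 * Real.pi * Δ *
        (((k : ℝ) + 1 / 2) / Δ + bEll σ Δ * Real.sin u)) ≤
        Real.pi ^ 2 * σ ^ 2 * Δ ^ 2 := by
      rw [hcos]; linarith [h6]
    have hxa : |aEll σ * Real.cos u| ≤ 1 / (Real.pi * σ) := by
      rw [abs_mul, abs_of_nonneg ha0]
      calc aEll σ * |Real.cos u| ≤ aEll σ * 1 :=
            mul_le_mul_of_nonneg_left (Real.abs_cos_le_one u) ha0
        _ ≤ 1 / (Real.pi * σ) := by rw [mul_one]; exact hale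
    have hD := pointwise_bound σ hσ Δ (((k : ℝ) + 1 / 2) / Δ + bEll σ Δ * Real.sin u)
      (aEll σ * Real.cos u) hΔ hle hxa hc1 hc2
    have hsqrtb : Real.sqrt ((aEll σ * Real.sin u) ^ 2 + (bEll σ Δ * Real.cos u) ^ 2) ≤
        1 / (Real.pi * σ) + Real.pi * σ := by
      have e1 : (aEll σ * Real.sin u) ^ 2 ≤ (1 / (Real.pi * σ)) ^ 2 := by
        rw [mul_pow]
        calc aEll σ ^ 2 * Real.sin u ^ 2 ≤ aEll σ ^ 2 * 1 :=
              mul_le_mul_of_nonneg_left (Real.sin_sq_le_one u) (by positivity)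
          _ ≤ (1 / (Real.pi * σ)) ^ 2 := by
              rw [mul_one]; exact pow_le_pow_left₀ ha0 hale 2
      have e2 : (bEll σ Δ * Real.cos u) ^ 2 ≤ (Real.pi * σ) ^ 2 := by
        rw [mul_pow]
        calc bEll σ Δ ^ 2 * Real.cos u ^ 2 ≤ bEll σ Δ ^ 2 * 1 :=
              mul_le_mul_of_nonneg_left (Real.cos_sq_le_one u) (by positivity)
          _ ≤ (Real.pi * σ) ^ 2 := by
              rw [mul_one]; exact pow_le_pow_left₀ hb0 hble 2
      calc Real.sqrt ((aEll σ * Real.sin u) ^ 2 + (bEll σ Δ * Real.cos u) ^ 2)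
          ≤ Real.sqrt ((1 / (Real.pi * σ) + Real.pi * σ) ^ 2) := by
            apply Real.sqrt_le_sqrt
            nlinarith [hP]
        _ = 1 / (Real.pi * σ) + Real.pi * σ := Real.sqrt_sq (by positivity)
    calc |deriv (fun x => Ffun σ Δ (((k : ℝ) + 1 / 2) / Δ + bEll σ Δ * Real.sin u) x)
          (aEll σ * Real.cos u)| *
        Real.sqrt ((aEll σ * Real.sin u) ^ 2 + (bEll σ Δ * Real.cos u) ^ 2)
        ≤ (80 * Real.pi ^ 3 * σ ^ 3 * Δ ^ 2) * (1 / (Real.pi * σ) + Real.pi * σ) :=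
          mul_le_mul hD hsqrtb (Real.sqrt_nonneg _) (by positivity)
      _ = 80 * Real.pi ^ 3 * σ ^ 3 * Δ ^ 2 * (1 / (Real.pi * σ) + Real.pi * σ) := by ring
  have hI := intervalIntegral.norm_integral_le_of_norm_le_const hbnd
  calc (∫ u in (0 : ℝ)..(2 * Real.pi), g u)
      ≤ ‖∫ u in (0 : ℝ)..(2 * Real.pi), g u‖ := by
        rw [Real.norm_eq_abs]; exact le_abs_self _
    _ ≤ 80 * Real.pi ^ 3 * σ ^ 3 * Δ ^ 2 * (1 / (Real.pi * σ) + Real.pi * σ) *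
        |2 * Real.pi - 0| := hI
    _ = 80 * Real.pi ^ 3 * σ ^ 3 * (1 / (Real.pi * σ) + Real.pi * σ) * (2 * Real.pi) *
        Δ ^ 2 := by
        rw [sub_zero, abs_of_pos (by positivity)]; ring
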